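/- For every ρ₊ > 0 there exists a constant c > 0 (depending only on ρ₊, Γ₋, Γ₊ and g) such that the following holds: for every ρ ∈ [0, ρ₊] and φ ≥ 0 with R(φ) = ρ, every ε ∈ (0,1], every n ∈ ℕ, and every family X₁, …, Xₙ of independent random variables each with distribution ν_φ, one has P[Σ_{k=1}^n X_k ≥ (ρ + ε)n] ≤ e^{−c ε² n}. -/

import Mathlib

open MeasureTheory ProbabilityTheory

/-- The "generalized factorial" `g(k)! = g(k) ⋯ g(1)`, with `g(0)! = 1`. -/
noncomputable def gFact (g : ℕ → ℝ) : ℕ → ℝ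
  | 0 => 1
  | n + 1 => g (n + 1) * gFact g n

/-- The partition function `Z(φ) = Σ_{k=0}^∞ φ^k / g(k)!`. -/
noncomputable def Zfun (g : ℕ → ℝ) (φ : ℝ) : ℝ := ∑' k : ℕ, φ ^ k / gFact g k

/-- The measure `ν_φ` on `ℕ`, given by `ν_φ(k) = φ^k / (g(k)!·Z(φ))`.
For `φ = 0` this is the Dirac mass at `0`. -/
noncomputable def nuMeasure (g : ℕ → ℝ) (φ : ℝ) : Measure ℕ :=
  Measure.sum fun k =>
    (ENNReal.ofReal (φ ^ k / (gFact g k * Zfun g φ))) • Measure.dirac k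

/-- The mean `R(φ) = (1/Z(φ)) Σ_{k=0}^∞ k φ^k / g(k)!` of `ν_φ`. -/
noncomputable def Rfun (g : ℕ → ℝ) (φ : ℝ) : ℝ :=
  (∑' k : ℕ, (k : ℝ) * φ ^ k / gFact g k) / Zfun g φ

lemma real_exp_tsum (x : ℝ) : ∑' n : ℕ, x ^ n / n.factorial = Real.exp x := by
  rw [Real.exp_eq_exp_ℝ, NormedSpace.exp_eq_tsum_div]

lemma sum_dom (x : ℝ) {u : ℕ → ℝ} (hu : ∀ k, 0 ≤ u k)
    (hb : ∀ k, u k ≤ x ^ k / k.factorial) :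
    Summable u ∧ ∑' k, u k ≤ Real.exp x := by
  have hs : Summable (fun k : ℕ => x ^ k / k.factorial) := Real.summable_pow_div_factorial x
  have h1 : Summable u := Summable.of_nonneg_of_le hu hb hs
  exact ⟨h1, (Summable.tsum_le_tsum hb h1 hs).trans_eq (real_exp_tsum x)⟩

lemma exp_taylor2 {y : ℝ} (hy : 0 ≤ y) :
    Real.exp y ≤ 1 + y + y ^ 2 * Real.exp y := by
  have hE := Real.exp_pos y
  have hh : Real.exp (-y) * Real.exp y = 1 := by rw [← Real.exp_add]; simp
  have h2 := mul_le_mul_of_nonneg_right (Real.add_one_le_exp (-y)) hE.le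
  have h1 : Real.exp y ≤ 1 + y * Real.exp y := by nlinarith
  nlinarith [mul_le_mul_of_nonneg_left h1 hy]

lemma nat_le_two_pow (k : ℕ) : (k : ℝ) ≤ 2 ^ k := by
  exact_mod_cast (Nat.lt_two_pow_self (n := k)).le

lemma g_bounds {g : ℕ → ℝ} {Γm Γp : ℝ} (hΓm : 0 < Γm) (hg0 : g 0 = 0)
    (hg : ∀ k : ℕ, 1 ≤ k → Γm ≤ g k - g (k - 1) ∧ g k - g (k - 1) ≤ Γp) :
    ∀ k : ℕ, Γm * k ≤ g k ∧ g k ≤ Γp * k := by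
  intro k
  induction k with
  | zero => simp [hg0]
  | succ n ih =>
    have h := hg (n + 1) (by omega)
    simp only [Nat.add_sub_cancel] at h
    push_cast
    constructor <;> nlinarith [ih.1, ih.2, h.1, h.2]

lemma gFact_lb {g : ℕ → ℝ} {Γm Γp : ℝ} (hΓm : 0 < Γm) (hg0 : g 0 = 0)
    (hg : ∀ k : ℕ, 1 ≤ k → Γm ≤ g k - g (k - 1) ∧ g k - g (k - 1) ≤ Γp) :
    ∀ k : ℕ, Γm ^ k * k.factorial ≤ gFact g k := by
  intro k
  induction k with
  | zero => simp [gFact]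
  | succ n ih =>
    have hgn := (g_bounds hΓm hg0 hg (n + 1)).1
    have h1 : (0:ℝ) < Γm * (n + 1) := by positivity
    have h2 : (0:ℝ) ≤ Γm ^ n * n.factorial := by positivity
    calc Γm ^ (n + 1) * (n + 1).factorial
        = (Γm * (n + 1)) * (Γm ^ n * n.factorial) := by
          rw [Nat.factorial_succ]; push_cast; ring
      _ ≤ g (n + 1) * gFact g n := by
          apply mul_le_mul (by exact_mod_cast hgn) ih h2 (le_trans h1.le (by exact_mod_cast hgn))
      _ = gFact g (n + 1) := rfl

lemma gFact_pos {g : ℕ → ℝ} {Γm Γp : ℝ} (hΓm : 0 < Γm) (hg0 : g 0 = 0)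
    (hg : ∀ k : ℕ, 1 ≤ k → Γm ≤ g k - g (k - 1) ∧ g k - g (k - 1) ≤ Γp)
    (k : ℕ) : 0 < gFact g k :=
  lt_of_lt_of_le (by positivity) (gFact_lb hΓm hg0 hg k)

lemma integral_nu (g : ℕ → ℝ) (φ : ℝ) (f : ℕ → ℝ)
    (hw : ∀ k, 0 ≤ φ ^ k / (gFact g k * Zfun g φ))
    (hf : ∀ k, 0 ≤ f k)
    (hsum : Summable (fun k => φ ^ k / (gFact g k * Zfun g φ) * f k)) :
    Integrable f (nuMeasure g φ) ∧
      ∫ x, f x ∂(nuMeasure g φ) = ∑' k, φ ^ k / (gFact g k * Zfun g φ) * f k := by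
  set w : ℕ → ℝ := fun k => φ ^ k / (gFact g k * Zfun g φ) with hwdef
  have hmeas : Measurable f := measurable_from_top
  have hInt : Integrable f (nuMeasure g φ) := by
    refine ⟨hmeas.aestronglyMeasurable, ?_⟩
    rw [hasFiniteIntegral_iff_ofReal (Filter.Eventually.of_forall hf),
      show nuMeasure g φ = Measure.sum fun k =>
        (ENNReal.ofReal (w k)) • Measure.dirac k from rfl, lintegral_sum_measure]
    have : ∀ k : ℕ, ∫⁻ a, ENNReal.ofReal (f a)
        ∂((ENNReal.ofReal (w k)) • Measure.dirac k) = ENNReal.ofReal (w k * f k) := by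
      intro k
      rw [lintegral_smul_measure, lintegral_dirac, smul_eq_mul]
      exact (ENNReal.ofReal_mul (hw k)).symm
    rw [tsum_congr this, ← ENNReal.ofReal_tsum_of_nonneg
      (fun k => mul_nonneg (hw k) (hf k)) hsum]
    exact ENNReal.ofReal_lt_top
  refine ⟨hInt, ?_⟩
  rw [show nuMeasure g φ = Measure.sum fun k =>
    (ENNReal.ofReal (w k)) • Measure.dirac k from rfl] at hInt ⊢
  rw [integral_sum_measure hInt]
  refine tsum_congr fun k => ?_
  rw [integral_smul_measure, integral_dirac, ENNReal.toReal_ofReal (hw k), smul_eq_mul]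

set_option maxHeartbeats 1600000 in
/-- upper concentration of the invariant measure. -/
theorem zrp_concentration_upper
    (g : ℕ → ℝ) (Γm Γp : ℝ)
    (hΓm : 0 < Γm) (hΓm1 : Γm ≤ 1) (hΓp : 1 ≤ Γp)
    (hg0 : g 0 = 0)
    (hg : ∀ k : ℕ, 1 ≤ k → Γm ≤ g k - g (k - 1) ∧ g k - g (k - 1) ≤ Γp)
    (ρp : ℝ) (hρp : 0 < ρp) :
    ∃ c : ℝ, 0 < c ∧
      ∀ ρ : ℝ, ρ ∈ Set.Icc 0 ρp → ∀ φ : ℝ, 0 ≤ φ → Rfun g φ = ρ →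
      ∀ ε : ℝ, ε ∈ Set.Ioc (0 : ℝ) 1 → ∀ n : ℕ,
      ∀ (Ω : Type) (_ : MeasurableSpace Ω) (P : Measure Ω), IsProbabilityMeasure P →
      ∀ X : Fin n → Ω → ℕ, (∀ i, Measurable (X i)) →
        iIndepFun X P →
        (∀ i, Measure.map (X i) P = nuMeasure g φ) →
        P {ω | (ρ + ε) * n ≤ ∑ i, (X i ω : ℝ)} ≤
          ENNReal.ofReal (Real.exp (-c * ε ^ 2 * n)) := by
  have he1 : (0:ℝ) < Real.exp 1 := Real.exp_pos 1
  set B : ℝ := Real.exp (4 * (Γp * ρp * Real.exp 1) / Γm) with hBdef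
  have hB1 : 1 ≤ B := Real.one_le_exp (by positivity)
  have hBpos : (0:ℝ) < B := lt_of_lt_of_le one_pos hB1
  refine ⟨1 / (4 * B), by positivity, ?_⟩
  rintro ρ ⟨hρ0, hρρp⟩ φ hφ hR ε ⟨hε0, hε1⟩ n Ω mΩ P hP X hX hind hmap
  have hgb := g_bounds hΓm hg0 hg
  have hfl := gFact_lb hΓm hg0 hg
  have hfp := gFact_pos hΓm hg0 hg
  set x0 : ℝ := φ / Γm with hx0
  have hx0n : 0 ≤ x0 := by positivity
  -- the basic term comparison
  have hcomp : ∀ k : ℕ, φ ^ k / gFact g k ≤ x0 ^ k / k.factorial := by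
    intro k
    rw [hx0, div_pow, div_div]
    gcongr
    · exact hfl k
  have hf0nn : ∀ k : ℕ, 0 ≤ φ ^ k / gFact g k :=
    fun k => div_nonneg (pow_nonneg hφ k) (hfp k).le
  obtain ⟨hs0, _⟩ := sum_dom x0 hf0nn hcomp
  -- Z ≥ 1
  have hZ1 : 1 ≤ Zfun g φ := by
    have h := Summable.le_tsum hs0 0 (fun j _ => hf0nn j)
    simpa [gFact, Zfun] using h
  have hZpos : (0:ℝ) < Zfun g φ := lt_of_lt_of_le one_pos hZ1
  have hZne : Zfun g φ ≠ 0 := hZpos.ne'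
  -- mean identity
  rw [Rfun] at hR
  have sum1 : ∑' k : ℕ, (k : ℝ) * φ ^ k / gFact g k = ρ * Zfun g φ := (div_eq_iff hZne).mp hR
  -- Summability of k * φ^k/gFact
  have hf1nn : ∀ k : ℕ, 0 ≤ (k : ℝ) * φ ^ k / gFact g k :=
    fun k => div_nonneg (mul_nonneg (Nat.cast_nonneg k) (pow_nonneg hφ k)) (hfp k).le
  have hf1b : ∀ k : ℕ, (k : ℝ) * φ ^ k / gFact g k ≤ (2 * x0) ^ k / k.factorial := by
    intro k
    have h1 : (k : ℝ) * φ ^ k / gFact g k ≤ 2 ^ k * (φ ^ k / gFact g k) := by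
      rw [mul_div_assoc]
      exact mul_le_mul_of_nonneg_right (nat_le_two_pow k) (hf0nn k)
    calc (k : ℝ) * φ ^ k / gFact g k ≤ 2 ^ k * (φ ^ k / gFact g k) := h1
      _ ≤ 2 ^ k * (x0 ^ k / k.factorial) :=
          mul_le_mul_of_nonneg_left (hcomp k) (by positivity)
      _ = (2 * x0) ^ k / k.factorial := by rw [mul_pow, mul_div_assoc]
  obtain ⟨hs1, _⟩ := sum_dom (2 * x0) hf1nn hf1b
  -- φ ≤ Γp * ρ
  have hgnn : ∀ k : ℕ, 0 ≤ g k := fun k => le_trans (by positivity) (hgb k).1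
  have hf2b : ∀ k : ℕ, g k * φ ^ k / gFact g k ≤ Γp * ((k : ℝ) * φ ^ k / gFact g k) := by
    intro k
    rw [mul_div_assoc, mul_div_assoc, ← mul_assoc]
    exact mul_le_mul_of_nonneg_right (hgb k).2 (hf0nn k)
  have hf2nn : ∀ k : ℕ, 0 ≤ g k * φ ^ k / gFact g k :=
    fun k => div_nonneg (mul_nonneg (hgnn k) (pow_nonneg hφ k)) (hfp k).le
  have hs2 : Summable (fun k : ℕ => g k * φ ^ k / gFact g k) :=
    Summable.of_nonneg_of_le hf2nn hf2b (hs1.mul_left Γp)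
  have hgpos : ∀ k : ℕ, 0 < g (k + 1) := by
    intro k
    refine lt_of_lt_of_le ?_ (hgb (k + 1)).1
    positivity
  have sum2 : ∑' k : ℕ, g k * φ ^ k / gFact g k = φ * Zfun g φ := by
    rw [Summable.tsum_eq_zero_add hs2]
    have h0 : g 0 * φ ^ 0 / gFact g 0 = 0 := by simp [hg0, gFact]
    have hsucc : ∀ k : ℕ, g (k + 1) * φ ^ (k + 1) / gFact g (k + 1)
        = φ * (φ ^ k / gFact g k) := by
      intro k
      rw [show gFact g (k + 1) = g (k + 1) * gFact g k from rfl]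
      rw [pow_succ]
      field_simp [(hgpos k).ne', (hfp k).ne']
    rw [h0, zero_add, tsum_congr hsucc, tsum_mul_left, Zfun]
  have hφρ : φ ≤ Γp * ρ := by
    have hle : φ * Zfun g φ ≤ (Γp * ρ) * Zfun g φ := by
      rw [← sum2]
      calc ∑' k : ℕ, g k * φ ^ k / gFact g k
          ≤ ∑' k : ℕ, Γp * ((k : ℝ) * φ ^ k / gFact g k) :=
            Summable.tsum_le_tsum hf2b hs2 (hs1.mul_left Γp)
        _ = Γp * (ρ * Zfun g φ) := by rw [tsum_mul_left, sum1]
        _ = (Γp * ρ) * Zfun g φ := by ring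
    exact le_of_mul_le_mul_right hle hZpos
  have hφub : φ ≤ Γp * ρp := le_trans hφρ (by nlinarith)
  -- the exponential tilt parameter
  set t : ℝ := ε / (2 * B) with htdef
  have ht0 : 0 < t := by positivity
  have ht1 : t ≤ 1 := by
    rw [htdef, div_le_one (by positivity)]
    nlinarith

  -- pointwise bounds for the series with exponential weights
  have hexpk : ∀ k : ℕ, Real.exp (t * k) ≤ Real.exp 1 ^ k := by
    intro k
    rw [← Real.exp_nat_mul]
    exact Real.exp_le_exp.mpr (by nlinarith [Nat.cast_nonneg (α := ℝ) k])
  have hk2 : ∀ k : ℕ, ((k : ℝ)) ^ 2 ≤ 4 ^ k := by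
    intro k
    have h := nat_le_two_pow k
    calc ((k : ℝ)) ^ 2 ≤ ((2 : ℝ) ^ k) ^ 2 := by
          nlinarith [Nat.cast_nonneg (α := ℝ) k]
      _ = 4 ^ k := by
          rw [← pow_mul, show (4:ℝ) = 2 ^ 2 by norm_num, ← pow_mul, mul_comm]
  -- the exp-weighted series
  have hfEnn : ∀ k : ℕ, 0 ≤ φ ^ k / gFact g k * Real.exp (t * k) :=
    fun k => mul_nonneg (hf0nn k) (Real.exp_pos _).le
  have hfEb : ∀ k : ℕ, φ ^ k / gFact g k * Real.exp (t * k)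
      ≤ (Real.exp 1 * x0) ^ k / k.factorial := by
    intro k
    calc φ ^ k / gFact g k * Real.exp (t * k)
        ≤ x0 ^ k / k.factorial * Real.exp 1 ^ k :=
          mul_le_mul (hcomp k) (hexpk k) (Real.exp_pos _).le (by positivity)
      _ = (Real.exp 1 * x0) ^ k / k.factorial := by
          rw [mul_pow]; ring
  obtain ⟨hsE, _⟩ := sum_dom (Real.exp 1 * x0) hfEnn hfEb
  -- the second-moment exp-weighted series
  have hf3nn : ∀ k : ℕ, 0 ≤ φ ^ k / gFact g k * (((k : ℝ)) ^ 2 * Real.exp (t * k)) :=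
    fun k => mul_nonneg (hf0nn k) (mul_nonneg (by positivity) (Real.exp_pos _).le)
  have hf3b : ∀ k : ℕ, φ ^ k / gFact g k * (((k : ℝ)) ^ 2 * Real.exp (t * k))
      ≤ (4 * Real.exp 1 * x0) ^ k / k.factorial := by
    intro k
    have h1 : ((k : ℝ)) ^ 2 * Real.exp (t * k) ≤ 4 ^ k * Real.exp 1 ^ k :=
      mul_le_mul (hk2 k) (hexpk k) (Real.exp_pos _).le (by positivity)
    calc φ ^ k / gFact g k * (((k : ℝ)) ^ 2 * Real.exp (t * k))
        ≤ x0 ^ k / k.factorial * (4 ^ k * Real.exp 1 ^ k) :=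
          mul_le_mul (hcomp k) h1 (by positivity) (by positivity)
      _ = (4 * Real.exp 1 * x0) ^ k / k.factorial := by
          rw [mul_pow, mul_pow]; ring
  obtain ⟨hs3, hsum3⟩ := sum_dom (4 * Real.exp 1 * x0) hf3nn hf3b
  have hsum3B : ∑' k : ℕ, φ ^ k / gFact g k * (((k : ℝ)) ^ 2 * Real.exp (t * k)) ≤ B := by
    refine hsum3.trans (Real.exp_le_exp.mpr ?_)
    have heq : 4 * Real.exp 1 * x0 = 4 * (φ * Real.exp 1) / Γm := by
      rw [hx0]; ring
    rw [heq]
    gcongr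
  -- weights
  set w : ℕ → ℝ := fun k => φ ^ k / (gFact g k * Zfun g φ) with hwdef
  have hwnn : ∀ k, 0 ≤ w k :=
    fun k => div_nonneg (pow_nonneg hφ k) (mul_nonneg (hfp k).le hZpos.le)
  have hZdefn : Zfun g φ = ∑' k : ℕ, φ ^ k / gFact g k := rfl
  have hw1 : ∀ (k : ℕ) (a : ℝ), w k * a = (φ ^ k / gFact g k * a) / Zfun g φ := by
    intro k a
    rw [hwdef]
    simp only
    rw [← div_div, div_mul_eq_mul_div]
  have hsummul : ∀ u : ℕ → ℝ, Summable (fun k => φ ^ k / gFact g k * u k) →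
      Summable (fun k => w k * u k) := by
    intro u hu
    exact (hu.div_const _).congr (fun k => (hw1 k (u k)).symm)
  have htsummul : ∀ u : ℕ → ℝ,
      ∑' k, w k * u k = (∑' k, φ ^ k / gFact g k * u k) / Zfun g φ := by
    intro u
    rw [← tsum_div_const]
    exact tsum_congr fun k => hw1 k (u k)
  have hsw1 : Summable (fun k => w k * 1) :=
    hsummul (fun _ => 1) (by simpa using hs0)
  have hswk : Summable (fun k => w k * (k : ℝ)) :=
    hsummul _ (hs1.congr fun k => by ring)
  have hswk2 : Summable (fun k => w k * (((k : ℝ)) ^ 2 * Real.exp (t * k))) :=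
    hsummul _ hs3
  have hswE : Summable (fun k => w k * Real.exp (t * (k : ℕ) : ℝ)) :=
    hsummul _ hsE
  -- tsum values
  have htsw1 : ∑' k, w k * 1 = 1 := by
    rw [htsummul]
    simp only [mul_one]
    rw [← hZdefn]
    exact div_self hZne
  have htswk : ∑' k, w k * (k : ℝ) = ρ := by
    rw [htsummul,
      tsum_congr (fun k => show φ ^ k / gFact g k * (k : ℝ) = (k : ℝ) * φ ^ k / gFact g k
        by ring),
      sum1, mul_div_assoc, div_self hZne, mul_one]
  have htswk2 : ∑' k, w k * (((k : ℝ)) ^ 2 * Real.exp (t * k)) ≤ B := by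
    rw [htsummul]
    exact le_trans (div_le_self (tsum_nonneg hf3nn) hZ1) hsum3B
  -- the mgf bound for a single variable
  have hmgf1 : ∀ i : Fin n, Integrable (fun ω => Real.exp (t * (X i ω : ℝ))) P ∧
      ∫ ω, Real.exp (t * (X i ω : ℝ)) ∂P ≤ Real.exp (t * ρ + t ^ 2 * B) := by
    intro i
    have hhnn : ∀ k : ℕ, 0 ≤ Real.exp (t * (k : ℝ)) := fun k => (Real.exp_pos _).le
    obtain ⟨hInt, hEq⟩ := integral_nu g φ (fun k => Real.exp (t * (k : ℝ))) hwnn hhnn hswE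
    have hmeash : Measurable (fun k : ℕ => Real.exp (t * (k : ℝ))) := measurable_from_top
    have hIntP : Integrable (fun ω => Real.exp (t * (X i ω : ℝ))) P := by
      rw [← hmap i] at hInt
      exact (integrable_map_measure hmeash.aestronglyMeasurable (hX i).aemeasurable).mp hInt
    have hIP : ∫ ω, Real.exp (t * (X i ω : ℝ)) ∂P
        = ∑' k, w k * Real.exp (t * (k : ℝ)) := by
      rw [← hEq, ← hmap i, integral_map (hX i).aemeasurable hmeash.aestronglyMeasurable]
    refine ⟨hIntP, ?_⟩
    rw [hIP]
    -- pointwise Taylor bound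
    have hpt : ∀ k : ℕ, w k * Real.exp (t * (k : ℝ))
        ≤ w k * 1 + (t * (w k * (k : ℝ))
          + t ^ 2 * (w k * (((k : ℝ)) ^ 2 * Real.exp (t * k)))) := by
      intro k
      have h1 := exp_taylor2 (mul_nonneg ht0.le (Nat.cast_nonneg k))
      have h2 := mul_le_mul_of_nonneg_left h1 (hwnn k)
      calc w k * Real.exp (t * (k : ℝ))
          ≤ w k * (1 + t * k + (t * k) ^ 2 * Real.exp (t * k)) := h2
        _ = w k * 1 + (t * (w k * (k : ℝ))
            + t ^ 2 * (w k * (((k : ℝ)) ^ 2 * Real.exp (t * k)))) := by ring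
    have hsRHS : Summable (fun k => w k * 1 + (t * (w k * (k : ℝ))
        + t ^ 2 * (w k * (((k : ℝ)) ^ 2 * Real.exp (t * k))))) :=
      hsw1.add ((hswk.mul_left t).add (hswk2.mul_left (t ^ 2)))
    calc ∑' k, w k * Real.exp (t * (k : ℝ))
        ≤ ∑' k, (w k * 1 + (t * (w k * (k : ℝ))
            + t ^ 2 * (w k * (((k : ℝ)) ^ 2 * Real.exp (t * k))))) :=
          Summable.tsum_le_tsum hpt hswE hsRHS
      _ = (∑' k, w k * 1) + ((∑' k, t * (w k * (k : ℝ)))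
            + ∑' k, t ^ 2 * (w k * (((k : ℝ)) ^ 2 * Real.exp (t * k)))) := by
          rw [Summable.tsum_add hsw1 ((hswk.mul_left t).add (hswk2.mul_left (t ^ 2))),
            Summable.tsum_add (hswk.mul_left t) (hswk2.mul_left (t ^ 2))]
      _ = 1 + (t * ρ + t ^ 2 * ∑' k, w k * (((k : ℝ)) ^ 2 * Real.exp (t * k))) := by
          rw [htsw1, tsum_mul_left, tsum_mul_left, htswk]
      _ ≤ 1 + (t * ρ + t ^ 2 * B) := by
          have := htswk2
          nlinarith [sq_nonneg t]
      _ ≤ Real.exp (t * ρ + t ^ 2 * B) := by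
          have := Real.add_one_le_exp (t * ρ + t ^ 2 * B)
          linarith
  -- Chernoff assembly
  set Y : Fin n → Ω → ℝ := fun i ω => ((X i ω : ℕ) : ℝ) with hYdef
  have hYm : ∀ i, Measurable (Y i) := fun i => measurable_from_top.comp (hX i)
  have hYind : iIndepFun Y P :=
    hind.comp (fun _ => (Nat.cast : ℕ → ℝ)) (fun _ => measurable_from_top)
  have hSint : Integrable (fun ω => Real.exp (t * (∑ i, Y i) ω)) P :=
    hYind.integrable_exp_mul_sum hYm (fun i _ => (hmgf1 i).1)
  have key := measure_ge_le_exp_mul_mgf (μ := P) (X := ∑ i, Y i) (t := t)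
    ((ρ + ε) * n) ht0.le hSint
  have hmgfS : mgf (∑ i, Y i) P t = ∏ i, mgf (Y i) P t := hYind.mgf_sum hYm Finset.univ
  have hmgfi : ∀ i, mgf (Y i) P t ≤ Real.exp (t * ρ + t ^ 2 * B) := fun i => (hmgf1 i).2
  have hprod : mgf (∑ i, Y i) P t ≤ Real.exp (t * ρ + t ^ 2 * B) ^ n := by
    rw [hmgfS]
    calc ∏ i, mgf (Y i) P t ≤ ∏ _i : Fin n, Real.exp (t * ρ + t ^ 2 * B) :=
          Finset.prod_le_prod (fun i _ => mgf_nonneg) (fun i _ => hmgfi i)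
      _ = Real.exp (t * ρ + t ^ 2 * B) ^ n := by
          rw [Finset.prod_const, Finset.card_univ, Fintype.card_fin]
  have hfinal : (P {ω | (ρ + ε) * n ≤ (∑ i, Y i) ω}).toReal
      ≤ Real.exp (-(1 / (4 * B)) * ε ^ 2 * n) := by
    refine key.trans ?_
    calc Real.exp (-t * ((ρ + ε) * n)) * mgf (∑ i, Y i) P t
        ≤ Real.exp (-t * ((ρ + ε) * n)) * Real.exp (t * ρ + t ^ 2 * B) ^ n :=
          mul_le_mul_of_nonneg_left hprod (Real.exp_pos _).le
      _ = Real.exp (-t * ((ρ + ε) * n) + n * (t * ρ + t ^ 2 * B)) := by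
          rw [← Real.exp_nat_mul, ← Real.exp_add]
      _ = Real.exp (-(1 / (4 * B)) * ε ^ 2 * n) := by
          congr 1
          rw [htdef]
          field_simp
          ring
  have hset : {ω | (ρ + ε) * n ≤ ∑ i, (X i ω : ℝ)}
      = {ω | (ρ + ε) * n ≤ (∑ i, Y i) ω} := by
    ext ω
    simp [hYdef, Finset.sum_apply]
  rw [hset, ← ENNReal.ofReal_toReal (measure_ne_top P _)]
  exact ENNReal.ofReal_le_ofReal hfinal
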